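/- Let A ⊆ ℤ. If A strongly contains arbitrarily long arithmetic progressions, then for every k ≥ 1 there exist integers b_1, …, b_k and c_1, …, c_k such that for all 1 ≤ i, j ≤ k, one has c_j − b_i ∈ A if and only if i ≤ j. -/
import Mathlib


open Filter Pointwise

/-- The `k`-fold sumset `X + ⋯ + X` (`k` times) of a set of integers. -/
def kFold (X : Set ℤ) (k : ℕ) : Set ℤ :=
  {z : ℤ | ∃ f : Fin k → ℤ, (∀ i, f i ∈ X) ∧ z = ∑ i, f i}

/-- `Σ_n(X) = ⋃_{k=1}^n k(X)`. -/
def sigmaSum (n : ℕ) (X : Set ℤ) : Set ℤ :=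
  ⋃ k ∈ Finset.Icc 1 n, kFold X k

/-- `±A = {x ∈ ℤ : |x| ∈ A}`. -/
def pmSet (A : Set ℤ) : Set ℤ := {x : ℤ | |x| ∈ A}

/-- The lower asymptotic density of a set of naturals:
`liminf_{n → ∞} |A ∩ {1,…,n}| / n`. -/
noncomputable def lowerDensity (A : Set ℕ) : ℝ :=
  Filter.liminf (fun n : ℕ => (Set.ncard (A ∩ Set.Icc 1 n) : ℝ) / n) Filter.atTop

/-- The set of naturals whose image in `ℤ` lies in `S`. -/
def intSetToNat (S : Set ℤ) : Set ℕ := {n : ℕ | (n : ℤ) ∈ S}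

/-- `A ⊆ ℤ` is sufficiently sparse if `δ̲(Σ_n(±A) ∩ ℕ) = 0` for all `n ≥ 1`. -/
def SuffSparse (A : Set ℤ) : Prop :=
  ∀ n : ℕ, 1 ≤ n → lowerDensity (intSetToNat (sigmaSum n (pmSet A))) = 0

/-- A set `S` of (positive) reals is geometric if `{s/t : s, t ∈ S, t ≤ s}` is a closed
and discrete subset of `ℝ`. -/
def IsGeometric (S : Set ℝ) : Prop :=
  IsClosed {x : ℝ | ∃ s ∈ S, ∃ t ∈ S, t ≤ s ∧ x = s / t} ∧
    DiscreteTopology {x : ℝ | ∃ s ∈ S, ∃ t ∈ S, t ≤ s ∧ x = s / t}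

/-- `A ⊆ ℤ` is geometrically sparse if there is `f : A → ℝ⁺` with `f(A)` geometric and
`sup_{a ∈ A} |a − f(a)| < ∞`. -/
def GeomSparse (A : Set ℤ) : Prop :=
  ∃ f : ℤ → ℝ, (∀ a ∈ A, 0 < f a) ∧ IsGeometric (f '' A) ∧
    ∃ C : ℝ, ∀ a ∈ A, |(a : ℝ) - f a| ≤ C

/-- If `A ⊆ ℤ` strongly contains arbitrarily long arithmetic progressions,
then for every `k ≥ 1` there are `b_1,…,b_k, c_1,…,c_k ∈ ℤ` such that `c_j − b_i ∈ A` iff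
`i ≤ j` (i.e. the formula `y − x ∈ A` has the order property). -/
theorem order_property_of_strong_ap (A : Set ℤ)
    (h : ∀ N : ℕ, ∃ a d : ℤ, 1 ≤ d ∧ (∀ i : ℕ, i < N → a + i * d ∈ A) ∧
      ∀ i : ℕ, 1 ≤ i → i < N → a - i * d ∉ A) :
    ∀ k : ℕ, 1 ≤ k → ∃ b c : Fin k → ℤ,
      ∀ i j : Fin k, (c j - b i ∈ A ↔ i ≤ j) := by
  intro k _
  obtain ⟨a, d, hd, hin, hout⟩ := h k
  refine ⟨fun i => (i : ℤ) * d, fun j => a + (j : ℤ) * d, fun i j => ?_⟩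
  constructor
  · intro hmem
    by_contra hij
    push_neg at hij
    have hji : (j : ℕ) < (i : ℕ) := hij
    have h1 : 1 ≤ (i : ℕ) - (j : ℕ) := by omega
    have h2 : (i : ℕ) - (j : ℕ) < k := by omega
    apply hout _ h1 h2
    have : a - (((i : ℕ) - (j : ℕ) : ℕ) : ℤ) * d = a + (j : ℤ) * d - (i : ℤ) * d := by
      push_cast [Nat.cast_sub (le_of_lt hji)]
      ring
    rw [this]
    exact hmem
  · intro hij
    have hij' : (i : ℕ) ≤ (j : ℕ) := hij
    have := hin ((j : ℕ) - (i : ℕ)) (by omega)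
    have heq : a + (((j : ℕ) - (i : ℕ) : ℕ) : ℤ) * d = a + (j : ℤ) * d - (i : ℤ) * d := by
      push_cast [Nat.cast_sub hij']
      ring
    rw [heq] at this
    exact this
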